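/- Let V = F₂^{2d} with a nondegenerate quadratic form of plus type and let t be an involution in the orthogonal group with [V,t] = Im(t−1) totally singular of dimension d (full defect). Then there exists a maximal totally singular subspace F of V with F ∩ F^t = 0. -/

import Mathlib

set_option maxHeartbeats 1600000 in
/-- Let `V = F₂^(2d)` with a nondegenerate plus-type quadratic form and let
`t` be an involutory isometry whose commutator space `[V,t] = Im(t-1)` is
totally singular of dimension `d` (full defect).  Then there is a maximal
totally singular subspace `F` with `F ∩ F^t = 0`. -/
theorem exists_totally_singular_complement_swap
    (d : ℕ) (hd : 1 ≤ d)
    (Q : QuadraticForm (ZMod 2) (Fin (2 * d) → ZMod 2))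
    (hnd : ∀ x, (∀ y, QuadraticMap.polar Q x y = 0) → x = 0)
    (hplus : ∃ T : Submodule (ZMod 2) (Fin (2 * d) → ZMod 2),
        Module.finrank (ZMod 2) T = d ∧ ∀ x ∈ T, Q x = 0)
    (t : (Fin (2 * d) → ZMod 2) →ₗ[ZMod 2] (Fin (2 * d) → ZMod 2))
    (ht2 : t ∘ₗ t = LinearMap.id)
    (hiso : ∀ x, Q (t x) = Q x)
    (hcomm_dim : Module.finrank (ZMod 2) (LinearMap.range (t - LinearMap.id)) = d)
    (hcomm_sing : ∀ x ∈ LinearMap.range (t - LinearMap.id), Q x = 0) :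
    ∃ F : Submodule (ZMod 2) (Fin (2 * d) → ZMod 2),
      Module.finrank (ZMod 2) F = d ∧ (∀ x ∈ F, Q x = 0) ∧
      F ⊓ F.map t = ⊥ := by
  classical
  set V := Fin (2 * d) → ZMod 2
  have h2 : ∀ a : ZMod 2, a + a = 0 := by decide
  have hchar : ∀ x : V, x + x = 0 := by
    intro x
    have h20 : (2 : ZMod 2) = 0 := by decide
    calc x + x = (2 : ZMod 2) • x := (two_smul _ x).symm
    _ = 0 := by rw [h20, zero_smul]
  set E := LinearMap.range (t - LinearMap.id) with hEdef
  -- dimension of the whole space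
  have hVdim : Module.finrank (ZMod 2) V = 2 * d := by
    simp [V, Module.finrank_pi]
  -- E is contained in the kernel of t - 1
  have hEker : E ≤ LinearMap.ker (t - LinearMap.id) := by
    rintro x ⟨y, rfl⟩
    have htt : t (t y) = y := by
      have := congrArg (fun f => f y) ht2
      simpa using this
    simp only [LinearMap.mem_ker, LinearMap.sub_apply, LinearMap.id_apply, map_sub, htt]
    calc y - t y - (t y - y) = (y - t y) + (y - t y) := by abel
    _ = 0 := hchar _
  -- hence E equals the kernel (dimension count)
  have hkerdim : Module.finrank (ZMod 2) (LinearMap.ker (t - LinearMap.id)) = d := by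
    have := LinearMap.finrank_range_add_finrank_ker (t - LinearMap.id)
    rw [hVdim, ← hEdef, hcomm_dim] at this
    omega
  have hEeq : E = LinearMap.ker (t - LinearMap.id) :=
    Submodule.eq_of_le_of_finrank_eq hEker (by rw [hcomm_dim, hkerdim])
  -- polar form vanishes identically on E
  have hpolarE : ∀ x ∈ E, ∀ y ∈ E, QuadraticMap.polar Q x y = 0 := by
    intro x hx y hy
    rw [QuadraticMap.polar, hcomm_sing _ (E.add_mem hx hy), hcomm_sing _ hx, hcomm_sing _ hy]
    ring
  -- choose a bilinear form C with C v v = Q v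
  obtain ⟨C, hC⟩ := LinearMap.BilinMap.toQuadraticMap_surjective Q
  have hCv : ∀ v : V, C v v = Q v := by
    intro v
    rw [← hC]
    rfl
  -- choose a complement W of E
  obtain ⟨W, hW⟩ := Submodule.exists_isCompl E
  have hWdim : Module.finrank (ZMod 2) W = d := by
    have := Submodule.finrank_add_eq_of_isCompl hW
    rw [hVdim, hcomm_dim] at this
    omega
  -- the pairing E → Dual W given by the polar form
  set ψ : E →ₗ[ZMod 2] Module.Dual (ZMod 2) W :=
    (LinearMap.compl₁₂ (QuadraticMap.polarBilin Q) W.subtype E.subtype).flip with hψdef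
  have hψapp : ∀ (e : E) (w : W), ψ e w = QuadraticMap.polar Q (w : V) (e : V) := by
    intro e w
    rfl
  have hψinj : Function.Injective ψ := by
    rw [injective_iff_map_eq_zero]
    intro e he
    have he' : ∀ w : W, QuadraticMap.polar Q (w : V) (e : V) = 0 := by
      intro w
      rw [← hψapp, he]
      rfl
    have : (e : V) = 0 := by
      apply hnd
      intro y
      obtain ⟨a, b, ha, hb, hab⟩ := Submodule.codisjoint_iff_exists_add_eq.mp hW.codisjoint y
      rw [← hab, QuadraticMap.polar_add_right]
      rw [QuadraticMap.polar_comm Q _ b, he' ⟨b, hb⟩, hpolarE _ e.2 _ ha]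
      ring
    exact Subtype.ext this
  have hdual : Module.finrank (ZMod 2) E
      = Module.finrank (ZMod 2) (Module.Dual (ZMod 2) W) := by
    rw [Subspace.dual_finrank_eq, hcomm_dim, hWdim]
  set ψe := LinearMap.linearEquivOfInjective ψ hψinj hdual with hψedef
  -- the correcting map φ : W → E
  set χ : W →ₗ[ZMod 2] Module.Dual (ZMod 2) W :=
    (LinearMap.compl₁₂ C W.subtype W.subtype).flip with hχdef
  set φ : W →ₗ[ZMod 2] E := ψe.symm.toLinearMap ∘ₗ χ with hφdef
  have hkey : ∀ w w' : W, QuadraticMap.polar Q (w' : V) ((φ w : E) : V) = C (w' : V) (w : V) := by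
    intro w w'
    have h1 : ψ (φ w) = χ w := by
      have : ψe (ψe.symm (χ w)) = χ w := ψe.apply_symm_apply _
      rwa [LinearMap.linearEquivOfInjective_apply] at this
    have := congrArg (fun f => f w') h1
    simp only [hψapp] at this
    exact this
  -- the graph map g : W → V
  set g : W →ₗ[ZMod 2] V := W.subtype + E.subtype ∘ₗ φ with hgdef
  have hgapp : ∀ w : W, g w = (w : V) + ((φ w : E) : V) := fun w => rfl
  -- g w ∈ E forces w = 0
  have hgE : ∀ w : W, g w ∈ E → w = 0 := by
    intro w hw
    have hwE : (w : V) ∈ E := by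
      have : (w : V) = g w - ((φ w : E) : V) := by rw [hgapp]; abel
      rw [this]
      exact E.sub_mem hw (φ w).2
    have : (w : V) ∈ E ⊓ W := ⟨hwE, w.2⟩
    rw [hW.inf_eq_bot] at this
    exact Subtype.ext this
  have hginj : Function.Injective g := by
    rw [← LinearMap.ker_eq_bot]
    rw [LinearMap.ker_eq_bot']
    intro w hw
    exact hgE w (by rw [hw]; exact E.zero_mem)
  refine ⟨LinearMap.range g, ?_, ?_, ?_⟩
  · rw [LinearMap.finrank_range_of_inj hginj, hWdim]
  · rintro x ⟨w, rfl⟩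
    rw [hgapp]
    have hQsum : Q ((w : V) + ((φ w : E) : V))
        = QuadraticMap.polar Q (w : V) ((φ w : E) : V) + Q (w : V) + Q ((φ w : E) : V) := by
      rw [QuadraticMap.polar]
      ring
    rw [hQsum, hkey w w, hCv, hcomm_sing _ (φ w).2, add_zero, h2]
  · rw [eq_bot_iff]
    rintro x ⟨hx1, hx2⟩
    obtain ⟨w1, rfl⟩ := hx1
    obtain ⟨y, hy, hty⟩ := hx2
    obtain ⟨w2, rfl⟩ := hy
    -- g w1 - g w2 ∈ E
    have hdiff : g w1 - g w2 ∈ E := by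
      rw [← hty]
      exact ⟨g w2, by simp⟩
    have hweq : w1 = w2 := by
      have := hgE (w1 - w2) (by rw [map_sub]; exact hdiff)
      have := sub_eq_zero.mp (congrArg _ this : ((w1 - w2 : W) : V) = ((0 : W) : V))
      exact Subtype.ext this
    subst hweq
    -- now g w1 is fixed by t, hence in ker(t-1) = E, hence 0
    have hker : g w1 ∈ LinearMap.ker (t - LinearMap.id) := by
      rw [LinearMap.mem_ker]
      show t (g w1) - g w1 = 0
      rw [hty, sub_self]
    rw [← hEeq] at hker
    have : w1 = 0 := hgE w1 hker
    rw [this, map_zero] at hty ⊢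
    rw [← hty, map_zero]
    exact Submodule.mem_bot _ |>.mpr rfl
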